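/- Let (x^k) be generated by the augmented Lagrangian method (Algorithm 3.1) applied to the partially penalized GNEP, under Assumption 3.2 with ε_k → 0 and ε'_k → 0, and let x̄ be a limit point of (x^k). If GNEP-EMFCQ holds at x̄ for the combined constraints c^ν = (g^ν, h^ν), then x̄ is feasible for the GNEP and x̄ is a KKT point of the GNEP. -/

import Mathlib

open Filter Topology Finset Function RealInnerProductSpace

/-- The strategy space of a GNEP: one Euclidean block per player. -/
abbrev Strat {N : ℕ} (n : Fin N → ℕ) := (ν : Fin N) → EuclideanSpace ℝ (Fin (n ν))

/-- Partial gradient of `f : Strat n → ℝ` with respect to player `ν`'s block at `x`. -/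
noncomputable def pgrad {N : ℕ} {n : Fin N → ℕ} (ν : Fin N)
    (f : Strat n → ℝ) (x : Strat n) : EuclideanSpace ℝ (Fin (n ν)) :=
  gradient (fun z => f (Function.update x ν z)) (x ν)

/-- Positive linear dependence of a family on a finite index set. -/
def PosLinDep {ι E : Type*} [AddCommGroup E] [Module ℝ E]
    (s : Finset ι) (v : ι → E) : Prop :=
  ∃ a : ι → ℝ, (∀ i, 0 ≤ a i) ∧ (∃ i ∈ s, a i ≠ 0) ∧ ∑ i ∈ s, a i • v i = 0

/-- Linear dependence of a family on a finite index set. -/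
def LinDep {ι E : Type*} [AddCommGroup E] [Module ℝ E]
    (s : Finset ι) (v : ι → E) : Prop :=
  ∃ a : ι → ℝ, (∃ i ∈ s, a i ≠ 0) ∧ ∑ i ∈ s, a i • v i = 0

/-- CPLD with respect to player `ν`. -/
def CPLDnu {N : ℕ} {n : Fin N → ℕ} {ι : Type*} (ν : Fin N)
    (c : ι → Strat n → ℝ) (x : Strat n) : Prop :=
  ∀ I : Finset ι, (∀ i ∈ I, c i x = 0) →
    PosLinDep I (fun i => pgrad ν (c i) x) →
    ∃ U ∈ 𝓝 x, ∀ y ∈ U, LinDep I (fun i => pgrad ν (c i) y)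

/-- EMFCQ with respect to player `ν`. -/
def EMFCQnu {N : ℕ} {n : Fin N → ℕ} {ι : Type*} (ν : Fin N)
    (c : ι → Strat n → ℝ) (x : Strat n) : Prop :=
  ∃ d : EuclideanSpace ℝ (Fin (n ν)), ∀ i, 0 ≤ c i x → inner (𝕜 := ℝ) (pgrad ν (c i) x) d < 0


noncomputable def Jmap {N : ℕ} (n : Fin N → ℕ) (ν : Fin N) :
    EuclideanSpace ℝ (Fin (n ν)) →L[ℝ] Strat n :=
  ContinuousLinearMap.pi (Pi.single ν (ContinuousLinearMap.id ℝ _))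

lemma pgrad_eq {N : ℕ} {n : Fin N → ℕ} (ν : Fin N) {f : Strat n → ℝ}
    (hf : ContDiff ℝ 1 f) (x : Strat n) :
    pgrad ν f x
      = (InnerProductSpace.toDual ℝ _).symm ((fderiv ℝ f x).comp (Jmap n ν)) := by
  have h2 : HasFDerivAt (Function.update x ν) (Jmap n ν) (x ν) := hasFDerivAt_update x (x ν)
  have h3 : HasFDerivAt f (fderiv ℝ f x) (Function.update x ν (x ν)) := by
    rw [Function.update_eq_self]
    exact (hf.differentiable one_ne_zero x).hasFDerivAt
  have h1 : HasFDerivAt (fun z => f (Function.update x ν z))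
      ((fderiv ℝ f x).comp (Jmap n ν)) (x ν) := h3.comp (x ν) h2
  rw [pgrad, gradient, h1.fderiv]

lemma pgrad_continuous {N : ℕ} {n : Fin N → ℕ} (ν : Fin N) {f : Strat n → ℝ}
    (hf : ContDiff ℝ 1 f) : Continuous (fun x => pgrad ν f x) := by
  have h1 : Continuous fun x => (fderiv ℝ f x).comp (Jmap n ν) :=
    (hf.continuous_fderiv one_ne_zero).clm_comp continuous_const
  have h2 := (InnerProductSpace.toDual ℝ
      (EuclideanSpace ℝ (Fin (n ν)))).symm.continuous.comp h1
  refine h2.congr fun x => ?_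
  rw [pgrad_eq ν hf x]
  rfl

lemma abs_le_sqrt_sum {q : ℕ} (v : Fin q → ℝ) (i : Fin q) :
    |v i| ≤ Real.sqrt (∑ j, v j ^ 2) := by
  rw [← Real.sqrt_sq_eq_abs]
  exact Real.sqrt_le_sqrt (Finset.single_le_sum (fun j _ => sq_nonneg (v j)) (mem_univ i))

/-- If `a j → c > 0` and `min (a j) (b j) → 0` then `b j → 0`. -/
lemma tendsto_min_aux {a b : ℕ → ℝ} {c : ℝ} (hc : 0 < c) (ha : Tendsto a atTop (𝓝 c))
    (hmin : Tendsto (fun j => min (a j) (b j)) atTop (𝓝 0)) :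
    Tendsto b atTop (𝓝 0) := by
  apply hmin.congr'
  have h1 : ∀ᶠ j in atTop, c / 2 < a j := ha.eventually (eventually_gt_nhds (by linarith))
  have h2 : ∀ᶠ j in atTop, min (a j) (b j) < c / 2 :=
    hmin.eventually (eventually_lt_nhds (by linarith))
  filter_upwards [h1, h2] with j hj1 hj2
  rcases min_cases (a j) (b j) with ⟨he, _⟩ | ⟨he, _⟩
  · rw [he] at hj2; linarith
  · rw [he]

/-- A monotone unbounded real sequence tends to infinity. -/
lemma tendsto_atTop_of_mono_unbdd {f : ℕ → ℝ} (hm : Monotone f)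
    (hb : ¬ BddAbove (Set.range f)) : Tendsto f atTop atTop := by
  apply tendsto_atTop_atTop_of_monotone hm
  intro b
  rw [not_bddAbove_iff] at hb
  obtain ⟨y, ⟨k, rfl⟩, hby⟩ := hb b
  exact ⟨k, hby.le⟩

/-- The penalty update scheme: if the penalty parameters stay bounded, then `V k → 0`. -/
lemma rho_bounded_V_tendsto {V ρ : ℕ → ℝ} {τ γ : ℝ} (hτ : τ ∈ Set.Ioo (0:ℝ) 1) (hγ : 1 < γ)
    (hρ0 : 0 < ρ 0)
    (hupd : ∀ k, (V (k+1) ≤ τ * V k → ρ (k+1) = ρ k) ∧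
      (¬ (V (k+1) ≤ τ * V k) → ρ (k+1) = γ * ρ k))
    (hV0 : ∀ k, 0 ≤ V k)
    (hbdd : BddAbove (Set.range ρ)) : Tendsto V atTop (𝓝 0) := by
  have hρpos : ∀ k, 0 < ρ k := by
    intro k; induction k with
    | zero => exact hρ0
    | succ k ih =>
      by_cases hk : V (k+1) ≤ τ * V k
      · rw [(hupd k).1 hk]; exact ih
      · rw [(hupd k).2 hk]; positivity
  have hmono : Monotone ρ := by
    apply monotone_nat_of_le_succ
    intro k
    by_cases hk : V (k+1) ≤ τ * V k
    · rw [(hupd k).1 hk]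
    · rw [(hupd k).2 hk]
      nlinarith [hρpos k]
  -- only finitely many failures of the test
  have hfin : ∃ k0, ∀ k ≥ k0, V (k+1) ≤ τ * V k := by
    by_contra hcon
    push_neg at hcon
    -- build an infinite sequence of failures
    choose F hF1 hF2 using hcon
    let f : ℕ → ℕ := fun i => Nat.rec (F 0) (fun _ prev => F (prev + 1)) i
    have hf0 : ∀ i, ¬ V (f i + 1) ≤ τ * V (f i) := by
      intro i; cases i with
      | zero => exact not_le.2 (hF2 0)
      | succ i => exact not_le.2 (hF2 _)
    have hfge : ∀ i, f i + 1 ≤ f (i + 1) := by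
      intro i
      exact hF1 (f i + 1)
    have hgrow : ∀ i, γ ^ (i + 1) * ρ 0 ≤ ρ (f i + 1) := by
      intro i; induction i with
      | zero =>
        have : ρ (f 0 + 1) = γ * ρ (f 0) := (hupd (f 0)).2 (hf0 0)
        rw [this]
        have : ρ 0 ≤ ρ (f 0) := hmono (Nat.zero_le _)
        rw [pow_one]
        nlinarith
      | succ i ih =>
        have h1 : ρ (f (i+1) + 1) = γ * ρ (f (i+1)) := (hupd (f (i+1))).2 (hf0 (i+1))
        have h2 : ρ (f i + 1) ≤ ρ (f (i+1)) := hmono (hfge i)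
        rw [h1, pow_succ]
        nlinarith
    obtain ⟨B, hB⟩ := hbdd
    have hBle : ∀ i, γ ^ (i + 1) * ρ 0 ≤ B := fun i =>
      (hgrow i).trans (hB ⟨_, rfl⟩)
    have htend : Tendsto (fun i : ℕ => γ ^ (i + 1) * ρ 0) atTop atTop := by
      apply Tendsto.atTop_mul_const hρ0
      exact (tendsto_pow_atTop_atTop_of_one_lt hγ).comp (tendsto_add_atTop_nat 1)
    obtain ⟨i, hi⟩ := (htend.eventually_gt_atTop B).exists
    exact absurd (hBle i) (not_le.2 hi)
  obtain ⟨k0, hk0⟩ := hfin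
  have hdecay : ∀ l, V (k0 + l) ≤ τ ^ l * V k0 := by
    intro l; induction l with
    | zero => simp
    | succ l ih =>
      have h1 : V (k0 + l + 1) ≤ τ * V (k0 + l) := hk0 _ (Nat.le_add_right _ _)
      have h2 : τ * V (k0 + l) ≤ τ * (τ ^ l * V k0) :=
        mul_le_mul_of_nonneg_left ih hτ.1.le
      calc V (k0 + (l + 1)) = V (k0 + l + 1) := by ring_nf
    _ ≤ τ * (τ ^ l * V k0) := h1.trans h2
    _ = τ ^ (l + 1) * V k0 := by ring
  have h1 : Tendsto (fun l => V (k0 + l)) atTop (𝓝 0) := by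
    apply squeeze_zero (fun l => hV0 _) hdecay
    have := tendsto_pow_atTop_nhds_zero_of_lt_one hτ.1.le hτ.2
    simpa using this.mul_const (V k0)
  have h2 : Tendsto (fun l => V (l + k0)) atTop (𝓝 0) := by
    apply h1.congr; intro l; rw [Nat.add_comm]
  exact (tendsto_add_atTop_iff_nat k0).mp h2

/-- **Theorem 4.6 (b).** A limit point of the augmented Lagrangian iterates at
which GNEP-EMFCQ holds for the combined constraints is feasible and a KKT point of the GNEP. -/
theorem stmt15 {N : ℕ} {n m p : Fin N → ℕ}
    (θ : Fin N → Strat n → ℝ)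
    (g : (ν : Fin N) → Fin (m ν) → Strat n → ℝ)
    (h : (ν : Fin N) → Fin (p ν) → Strat n → ℝ)
    (hθ : ∀ ν, ContDiff ℝ 1 (θ ν))
    (hg : ∀ ν i, ContDiff ℝ 1 (g ν i))
    (hh : ∀ ν j, ContDiff ℝ 1 (h ν j))
    (x : ℕ → Strat n)
    (lam : (k : ℕ) → (ν : Fin N) → Fin (m ν) → ℝ)
    (mu : (k : ℕ) → (ν : Fin N) → Fin (p ν) → ℝ)
    (u : (k : ℕ) → (ν : Fin N) → Fin (m ν) → ℝ)
    (rho : ℕ → Fin N → ℝ)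
    (umax : ℝ) (τ γ : Fin N → ℝ)
    (humax : 0 ≤ umax)
    (hτ : ∀ ν, τ ν ∈ Set.Ioo (0:ℝ) 1)
    (hγ : ∀ ν, 1 < γ ν)
    (hrho0 : ∀ ν, 0 < rho 0 ν)
    (hu0 : ∀ ν i, u 0 ν i ∈ Set.Icc 0 umax)
    (hlam : ∀ k ν i, lam (k+1) ν i = max (u k ν i + rho k ν * g ν i (x (k+1))) 0)
    (hu : ∀ k ν i, u (k+1) ν i = min (lam (k+1) ν i) umax)
    (hrho : ∀ k ν,
      (Real.sqrt (∑ i, (min (-(g ν i (x (k+1)))) (lam (k+1) ν i)) ^ 2) ≤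
          τ ν * Real.sqrt (∑ i, (min (-(g ν i (x k))) (lam k ν i)) ^ 2) →
        rho (k+1) ν = rho k ν) ∧
      (¬ (Real.sqrt (∑ i, (min (-(g ν i (x (k+1)))) (lam (k+1) ν i)) ^ 2) ≤
          τ ν * Real.sqrt (∑ i, (min (-(g ν i (x k))) (lam k ν i)) ^ 2)) →
        rho (k+1) ν = γ ν * rho k ν))
    (eps eps' : ℕ → ℝ)
    (heps0 : ∀ k, 0 ≤ eps k)
    (heps'0 : ∀ k, 0 ≤ eps' k)
    (heps' : Tendsto eps' atTop (𝓝 0))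
    (hA1 : ∀ k ν, ‖pgrad ν (θ ν) (x (k+1))
        + ∑ i, max (u k ν i + rho k ν * g ν i (x (k+1))) 0 • pgrad ν (g ν i) (x (k+1))
        + ∑ j, mu (k+1) ν j • pgrad ν (h ν j) (x (k+1))‖ ≤ eps k)
    (hA2 : ∀ k ν, Real.sqrt (∑ j, (min (-(h ν j (x (k+1)))) (mu (k+1) ν j)) ^ 2) ≤ eps' k)
    (heps : Tendsto eps atTop (𝓝 0))
    (xbar : Strat n)
    (hclus : MapClusterPt xbar atTop x)
    (hEMFCQ : ∀ ν, EMFCQnu ν (Sum.elim (g ν) (h ν)) xbar) :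
    ((∀ ν i, g ν i xbar ≤ 0) ∧ (∀ ν j, h ν j xbar ≤ 0)) ∧
    ∃ (lambar : (ν : Fin N) → Fin (m ν) → ℝ) (mubar : (ν : Fin N) → Fin (p ν) → ℝ),
      ∀ ν, (pgrad ν (θ ν) xbar + ∑ i, lambar ν i • pgrad ν (g ν i) xbar
          + ∑ j, mubar ν j • pgrad ν (h ν j) xbar = 0) ∧
        (∀ i, min (-(g ν i xbar)) (lambar ν i) = 0) ∧
        (∀ j, min (-(h ν j xbar)) (mubar ν j) = 0) := by
  classical
  -- extract a convergent subsequence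
  obtain ⟨φ, hφmono, hφtend⟩ := TopologicalSpace.FirstCountableTopology.tendsto_subseq hclus
  set K : ℕ → ℕ := fun j => φ (j+1) - 1 with hKdef
  have hK1 : ∀ j, K j + 1 = φ (j+1) := by
    intro j
    have h1 : j + 1 ≤ φ (j+1) := hφmono.le_apply
    simp only [hKdef]
    omega
  have hKge : ∀ j, j ≤ K j := by
    intro j
    have h1 : j + 1 ≤ φ (j+1) := hφmono.le_apply
    simp only [hKdef]; omega
  have hKtend : Tendsto K atTop atTop := tendsto_atTop_mono hKge tendsto_id
  have hy : Tendsto (fun j => x (K j + 1)) atTop (𝓝 xbar) := by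
    refine (hφtend.comp (tendsto_add_atTop_nat 1)).congr fun j => ?_
    simp only [Function.comp_apply, hK1 j]
  -- bounds on u and lam
  have hubd : ∀ k ν' i, 0 ≤ u k ν' i ∧ u k ν' i ≤ umax := by
    intro k
    induction k with
    | zero => intro ν' i; exact ⟨(hu0 ν' i).1, (hu0 ν' i).2⟩
    | succ k ih =>
      intro ν' i
      rw [hu k ν' i]
      refine ⟨le_min ?_ humax, min_le_right _ _⟩
      rw [hlam]; exact le_max_right _ _
  have hlampos : ∀ k ν' i, 0 ≤ lam (k+1) ν' i := by
    intro k ν' i; rw [hlam]; exact le_max_right _ _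
  -- rho positivity and monotonicity
  have hρpos : ∀ ν' k, 0 < rho k ν' := by
    intro ν' k
    induction k with
    | zero => exact hrho0 ν'
    | succ k ih =>
      by_cases htest : Real.sqrt (∑ i, (min (-(g ν' i (x (k+1)))) (lam (k+1) ν' i)) ^ 2) ≤
          τ ν' * Real.sqrt (∑ i, (min (-(g ν' i (x k))) (lam k ν' i)) ^ 2)
      · rw [(hrho k ν').1 htest]; exact ih
      · rw [(hrho k ν').2 htest]
        have := hγ ν'
        positivity
  have hρmono : ∀ ν', Monotone (fun k => rho k ν') := by
    intro ν'
    apply monotone_nat_of_le_succ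
    intro k
    by_cases htest : Real.sqrt (∑ i, (min (-(g ν' i (x (k+1)))) (lam (k+1) ν' i)) ^ 2) ≤
        τ ν' * Real.sqrt (∑ i, (min (-(g ν' i (x k))) (lam k ν' i)) ^ 2)
    · rw [(hrho k ν').1 htest]
    · rw [(hrho k ν').2 htest]
      nlinarith [hρpos ν' k, hγ ν']
  suffices H : ∀ ν : Fin N, (∀ i, g ν i xbar ≤ 0) ∧ (∀ jj, h ν jj xbar ≤ 0) ∧
      ∃ (lb : Fin (m ν) → ℝ) (mb : Fin (p ν) → ℝ),
        (pgrad ν (θ ν) xbar + ∑ i, lb i • pgrad ν (g ν i) xbar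
            + ∑ jj, mb jj • pgrad ν (h ν jj) xbar = 0) ∧
          (∀ i, min (-(g ν i xbar)) (lb i) = 0) ∧
          (∀ jj, min (-(h ν jj xbar)) (mb jj) = 0) by
    refine ⟨⟨fun ν => (H ν).1, fun ν => (H ν).2.1⟩,
      fun ν => Classical.choose (H ν).2.2,
      fun ν => Classical.choose (Classical.choose_spec (H ν).2.2),
      fun ν => Classical.choose_spec (Classical.choose_spec (H ν).2.2)⟩
  intro ν
  -- continuity facts along the subsequence
  have hyθ : Tendsto (fun j => pgrad ν (θ ν) (x (K j + 1))) atTop (𝓝 (pgrad ν (θ ν) xbar)) :=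
    ((pgrad_continuous ν (hθ ν)).tendsto xbar).comp hy
  have hyG : ∀ i, Tendsto (fun j => pgrad ν (g ν i) (x (K j + 1))) atTop
      (𝓝 (pgrad ν (g ν i) xbar)) :=
    fun i => ((pgrad_continuous ν (hg ν i)).tendsto xbar).comp hy
  have hyH : ∀ jj, Tendsto (fun j => pgrad ν (h ν jj) (x (K j + 1))) atTop
      (𝓝 (pgrad ν (h ν jj) xbar)) :=
    fun jj => ((pgrad_continuous ν (hh ν jj)).tendsto xbar).comp hy
  have hygv : ∀ i, Tendsto (fun j => g ν i (x (K j + 1))) atTop (𝓝 (g ν i xbar)) :=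
    fun i => (((hg ν i).continuous).tendsto xbar).comp hy
  have hyhv : ∀ jj, Tendsto (fun j => h ν jj (x (K j + 1))) atTop (𝓝 (h ν jj xbar)) :=
    fun jj => (((hh ν jj).continuous).tendsto xbar).comp hy
  have he : Tendsto (fun j => eps (K j)) atTop (𝓝 0) := heps.comp hKtend
  have he' : Tendsto (fun j => eps' (K j)) atTop (𝓝 0) := heps'.comp hKtend
  -- the h-part of the complementarity measure tends to zero
  have hminhb : ∀ j jj, |min (-(h ν jj (x (K j + 1)))) (mu (K j + 1) ν jj)| ≤ eps' (K j) :=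
    fun j jj => (abs_le_sqrt_sum
      (fun jj' => min (-(h ν jj' (x (K j + 1)))) (mu (K j + 1) ν jj')) jj).trans (hA2 (K j) ν)
  have hminh : ∀ jj, Tendsto (fun j => min (-(h ν jj (x (K j + 1)))) (mu (K j + 1) ν jj))
      atTop (𝓝 0) := by
    intro jj
    exact squeeze_zero_norm (fun j => hminhb j jj) he'
  -- feasibility of h at the limit
  have hfeasH : ∀ jj, h ν jj xbar ≤ 0 := by
    intro jj
    have h1 : Tendsto (fun j => -(h ν jj (x (K j + 1)))) atTop (𝓝 (-(h ν jj xbar))) :=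
      (hyhv jj).neg
    have h2 : (0:ℝ) ≤ -(h ν jj xbar) :=
      le_of_tendsto_of_tendsto (hminh jj) h1 (Eventually.of_forall fun j => min_le_left _ _)
    linarith
  -- multipliers of strictly feasible h-constraints tend to zero
  have hmu0 : ∀ jj, h ν jj xbar < 0 →
      Tendsto (fun j => mu (K j + 1) ν jj) atTop (𝓝 0) := by
    intro jj hlt
    exact tendsto_min_aux (by linarith : (0:ℝ) < -(h ν jj xbar)) (hyhv jj).neg (hminh jj)
  -- dichotomy on the penalty parameters
  have hKey : (∀ i, Tendsto (fun j => min (-(g ν i (x (K j + 1)))) (lam (K j + 1) ν i))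
        atTop (𝓝 0)) ∨ Tendsto (fun j => rho (K j) ν) atTop atTop := by
    by_cases hB : BddAbove (Set.range fun k => rho k ν)
    · left
      have hV : Tendsto (fun k =>
          Real.sqrt (∑ i, (min (-(g ν i (x k))) (lam k ν i)) ^ 2)) atTop (𝓝 0) :=
        rho_bounded_V_tendsto (hτ ν) (hγ ν) (hrho0 ν) (fun k => hrho k ν)
          (fun k => Real.sqrt_nonneg _) hB
      have hK1tend : Tendsto (fun j => K j + 1) atTop atTop :=
        tendsto_atTop_mono (fun j => Nat.le_succ (K j)) hKtend
      intro i
      apply squeeze_zero_norm (fun j => ?_) (hV.comp hK1tend)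
      exact abs_le_sqrt_sum (fun i' => min (-(g ν i' (x (K j + 1)))) (lam (K j + 1) ν i')) i
    · right
      exact (tendsto_atTop_of_mono_unbdd (hρmono ν) hB).comp hKtend
  -- multipliers of strictly feasible g-constraints tend to zero
  have hP1 : ∀ i, g ν i xbar < 0 →
      Tendsto (fun j => lam (K j + 1) ν i) atTop (𝓝 0) := by
    intro i hneg
    rcases hKey with hming | hrinf
    · exact tendsto_min_aux (by linarith : (0:ℝ) < -(g ν i xbar)) (hygv i).neg (hming i)
    · have h1 : ∀ᶠ j in atTop, g ν i (x (K j + 1)) ≤ g ν i xbar / 2 :=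
        (hygv i).eventually (eventually_le_nhds (by linarith))
      have h2 : ∀ᶠ j in atTop, (2 * umax) / (-(g ν i xbar)) ≤ rho (K j) ν :=
        hrinf.eventually_ge_atTop _
      apply tendsto_const_nhds.congr'
      filter_upwards [h1, h2] with j hj1 hj2
      rw [hlam (K j) ν i]
      symm
      apply max_eq_right
      have hu1 := (hubd (K j) ν i).2
      have hrj := hρpos ν (K j)
      have hg2 : rho (K j) ν * g ν i (x (K j + 1)) ≤ rho (K j) ν * (g ν i xbar / 2) :=
        mul_le_mul_of_nonneg_left hj1 hrj.le
      have h3 : 2 * umax ≤ rho (K j) ν * (-(g ν i xbar)) :=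
        (div_le_iff₀ (by linarith : (0:ℝ) < -(g ν i xbar))).mp hj2
      nlinarith
  -- the approximate stationarity expression tends to zero
  have hW0 : Tendsto (fun j => pgrad ν (θ ν) (x (K j + 1))
      + ∑ i, lam (K j + 1) ν i • pgrad ν (g ν i) (x (K j + 1))
      + ∑ jj, mu (K j + 1) ν jj • pgrad ν (h ν jj) (x (K j + 1))) atTop (𝓝 0) := by
    apply squeeze_zero_norm (fun j => ?_) he
    have h1 := hA1 (K j) ν
    simp only [← hlam] at h1
    exact h1
  -- lower bound for mu
  have hmu_lb : ∀ j jj, -(eps' (K j)) ≤ mu (K j + 1) ν jj := by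
    intro j jj
    have h1 := (abs_le.mp (hminhb j jj)).1
    have h2 := min_le_right (-(h ν jj (x (K j + 1)))) (mu (K j + 1) ν jj)
    linarith
  -- combined multiplier vector
  set w : ℕ → (Fin (m ν) ⊕ Fin (p ν)) → ℝ :=
    fun j => Sum.elim (fun i => lam (K j + 1) ν i) (fun jj => mu (K j + 1) ν jj) with hwdef
  obtain ⟨d, hd⟩ := hEMFCQ ν
  have hdg : ∀ i, 0 ≤ g ν i xbar → (inner (𝕜 := ℝ) (pgrad ν (g ν i) xbar) d) < 0 := by
    intro i hi
    simpa using hd (Sum.inl i) hi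
  have hdh : ∀ jj, 0 ≤ h ν jj xbar → (inner (𝕜 := ℝ) (pgrad ν (h ν jj) xbar) d) < 0 := by
    intro jj hjj
    simpa using hd (Sum.inr jj) hjj
  -- the multiplier sequence is bounded
  have hbdd : ∃ C, ∀ j, ‖w j‖ ≤ C := by
    by_contra hc
    push_neg at hc
    have hfreq : ∀ c : ℕ, ∃ᶠ k in atTop, (c:ℝ) < ‖w k‖ := by
      intro c
      rw [frequently_atTop]
      intro k0
      obtain ⟨j, hj⟩ := hc (max (c:ℝ)
        ((Finset.range (k0+1)).sup' Finset.nonempty_range_add_one (fun i => ‖w i‖)))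
      refine ⟨j, ?_, lt_of_le_of_lt (le_max_left _ _) hj⟩
      by_contra hjk
      push_neg at hjk
      have h1 : ‖w j‖ ≤ (Finset.range (k0+1)).sup' Finset.nonempty_range_add_one
          (fun i => ‖w i‖) :=
        Finset.le_sup' (fun i => ‖w i‖) (Finset.mem_range.2 (Nat.lt_succ_of_lt hjk))
      have h2 := le_max_right (c:ℝ)
        ((Finset.range (k0+1)).sup' Finset.nonempty_range_add_one (fun i => ‖w i‖))
      linarith
    obtain ⟨σ, hσmono, hσ⟩ := Filter.extraction_forall_of_frequently hfreq
    have hσT : Tendsto σ atTop atTop := hσmono.tendsto_atTop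
    set t : ℕ → ℝ := fun j => ‖w (σ j)‖ with htdef
    have htpos : ∀ j, 0 < t j := fun j => lt_of_le_of_lt (Nat.cast_nonneg j) (hσ j)
    have htinf : Tendsto t atTop atTop :=
      tendsto_atTop_mono (fun j => (hσ j).le) tendsto_natCast_atTop_atTop
    have htinv : Tendsto (fun j => (t j)⁻¹) atTop (𝓝 0) := htinf.inv_tendsto_atTop
    set v : ℕ → (Fin (m ν) ⊕ Fin (p ν)) → ℝ := fun j => (t j)⁻¹ • w (σ j) with hvdef
    have hv1 : ∀ j, ‖v j‖ = 1 := by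
      intro j
      rw [hvdef]
      simp only [norm_smul, Real.norm_eq_abs, abs_of_pos (inv_pos.2 (htpos j))]
      rw [inv_mul_cancel₀ (htpos j).ne']
    obtain ⟨vb, _, σ', hσ'mono, hσ'tend⟩ := tendsto_subseq_of_bounded
      (Metric.isBounded_closedBall (x := (0 : (Fin (m ν) ⊕ Fin (p ν)) → ℝ)) (r := 1))
      (fun j => mem_closedBall_zero_iff.2 (hv1 j).le)
    have hσ'T : Tendsto σ' atTop atTop := hσ'mono.tendsto_atTop
    have hσσ' : Tendsto (fun j => σ (σ' j)) atTop atTop := hσT.comp hσ'T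
    have hnorm1 : ‖vb‖ = 1 := by
      have h1 : Tendsto (fun j => ‖v (σ' j)‖) atTop (𝓝 ‖vb‖) :=
        (continuous_norm.tendsto vb).comp hσ'tend
      have h2 : (fun j => ‖v (σ' j)‖) = fun _ => (1:ℝ) := funext fun j => hv1 _
      rw [h2] at h1
      exact tendsto_nhds_unique h1 tendsto_const_nhds
    have hcomp : ∀ s, Tendsto (fun j => v (σ' j) s) atTop (𝓝 (vb s)) :=
      fun s => ((continuous_apply s).tendsto vb).comp hσ'tend
    have hvL : ∀ j i, v j (Sum.inl i) = (t j)⁻¹ * lam (K (σ j) + 1) ν i := fun j i => rfl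
    have hvR : ∀ j jj, v j (Sum.inr jj) = (t j)⁻¹ * mu (K (σ j) + 1) ν jj := fun j jj => rfl
    have htinv' : Tendsto (fun j => (t (σ' j))⁻¹) atTop (𝓝 0) := htinv.comp hσ'T
    -- nonnegativity of the limit coefficients
    have hvbL : ∀ i, 0 ≤ vb (Sum.inl i) := by
      intro i
      refine ge_of_tendsto' (hcomp (Sum.inl i)) fun j => ?_
      rw [hvL]
      exact mul_nonneg (inv_pos.2 (htpos (σ' j))).le (hlampos _ ν i)
    have hvbR : ∀ jj, 0 ≤ vb (Sum.inr jj) := by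
      intro jj
      have hlow : Tendsto (fun j => -((t (σ' j))⁻¹ * eps' (K (σ (σ' j))))) atTop (𝓝 0) := by
        have := (htinv'.mul (he'.comp hσσ')).neg
        simpa using this
      refine le_of_tendsto_of_tendsto hlow (hcomp (Sum.inr jj))
        (Eventually.of_forall fun j => ?_)
      show -((t (σ' j))⁻¹ * eps' (K (σ (σ' j)))) ≤ v (σ' j) (Sum.inr jj)
      rw [hvR]
      have h1 := hmu_lb (σ (σ' j)) jj
      have h2 := (inv_pos.2 (htpos (σ' j))).le
      nlinarith
    -- supports of the limit coefficients
    have hsuppg : ∀ i, g ν i xbar < 0 → vb (Sum.inl i) = 0 := by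
      intro i hneg
      refine tendsto_nhds_unique (hcomp (Sum.inl i)) ?_
      have := htinv'.mul ((hP1 i hneg).comp hσσ')
      simpa [hvL] using this
    have hsupph : ∀ jj, h ν jj xbar < 0 → vb (Sum.inr jj) = 0 := by
      intro jj hneg
      refine tendsto_nhds_unique (hcomp (Sum.inr jj)) ?_
      have := htinv'.mul ((hmu0 jj hneg).comp hσσ')
      simpa [hvR] using this
    -- limit of the scaled stationarity expression
    have hce : Tendsto (fun j => (t (σ' j))⁻¹ • (pgrad ν (θ ν) (x (K (σ (σ' j)) + 1))
        + ∑ i, lam (K (σ (σ' j)) + 1) ν i • pgrad ν (g ν i) (x (K (σ (σ' j)) + 1))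
        + ∑ jj, mu (K (σ (σ' j)) + 1) ν jj • pgrad ν (h ν jj) (x (K (σ (σ' j)) + 1))))
        atTop (𝓝 0) := by
      have := htinv'.smul (hW0.comp hσσ')
      simpa using this
    have hce2 : Tendsto (fun j => (t (σ' j))⁻¹ • (pgrad ν (θ ν) (x (K (σ (σ' j)) + 1))
        + ∑ i, lam (K (σ (σ' j)) + 1) ν i • pgrad ν (g ν i) (x (K (σ (σ' j)) + 1))
        + ∑ jj, mu (K (σ (σ' j)) + 1) ν jj • pgrad ν (h ν jj) (x (K (σ (σ' j)) + 1))))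
        atTop (𝓝 (∑ i, vb (Sum.inl i) • pgrad ν (g ν i) xbar
          + ∑ jj, vb (Sum.inr jj) • pgrad ν (h ν jj) xbar)) := by
      have hexp : ∀ j, (t (σ' j))⁻¹ • (pgrad ν (θ ν) (x (K (σ (σ' j)) + 1))
          + ∑ i, lam (K (σ (σ' j)) + 1) ν i • pgrad ν (g ν i) (x (K (σ (σ' j)) + 1))
          + ∑ jj, mu (K (σ (σ' j)) + 1) ν jj • pgrad ν (h ν jj) (x (K (σ (σ' j)) + 1)))
          = (t (σ' j))⁻¹ • pgrad ν (θ ν) (x (K (σ (σ' j)) + 1))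
          + ∑ i, (v (σ' j) (Sum.inl i)) • pgrad ν (g ν i) (x (K (σ (σ' j)) + 1))
          + ∑ jj, (v (σ' j) (Sum.inr jj)) • pgrad ν (h ν jj) (x (K (σ (σ' j)) + 1)) := by
        intro j
        simp only [smul_add, Finset.smul_sum, hvL, hvR, smul_smul]
      rw [funext hexp]
      have T1 : Tendsto (fun j => (t (σ' j))⁻¹ • pgrad ν (θ ν) (x (K (σ (σ' j)) + 1)))
          atTop (𝓝 0) := by
        have := htinv'.smul (hyθ.comp hσσ')
        simpa using this
      have T2 : Tendsto (fun j => ∑ i, (v (σ' j) (Sum.inl i))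
          • pgrad ν (g ν i) (x (K (σ (σ' j)) + 1))) atTop
          (𝓝 (∑ i, vb (Sum.inl i) • pgrad ν (g ν i) xbar)) :=
        tendsto_finset_sum _ fun i _ => (hcomp (Sum.inl i)).smul ((hyG i).comp hσσ')
      have T3 : Tendsto (fun j => ∑ jj, (v (σ' j) (Sum.inr jj))
          • pgrad ν (h ν jj) (x (K (σ (σ' j)) + 1))) atTop
          (𝓝 (∑ jj, vb (Sum.inr jj) • pgrad ν (h ν jj) xbar)) :=
        tendsto_finset_sum _ fun jj _ => (hcomp (Sum.inr jj)).smul ((hyH jj).comp hσσ')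
      have := (T1.add T2).add T3
      simpa using this
    have hKeyEq : ∑ i, vb (Sum.inl i) • pgrad ν (g ν i) xbar
        + ∑ jj, vb (Sum.inr jj) • pgrad ν (h ν jj) xbar = 0 :=
      tendsto_nhds_unique hce2 hce
    -- contradiction with EMFCQ
    have hinner : ∑ i, vb (Sum.inl i) * (inner (𝕜 := ℝ) (pgrad ν (g ν i) xbar) d)
        + ∑ jj, vb (Sum.inr jj) * (inner (𝕜 := ℝ) (pgrad ν (h ν jj) xbar) d) = 0 := by
      have h1 : (inner (𝕜 := ℝ) (∑ i, vb (Sum.inl i) • pgrad ν (g ν i) xbar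
          + ∑ jj, vb (Sum.inr jj) • pgrad ν (h ν jj) xbar) d : ℝ) = 0 := by
        rw [hKeyEq]
        exact inner_zero_left d
      rw [inner_add_left, sum_inner, sum_inner] at h1
      simp only [real_inner_smul_left] at h1
      exact h1
    have hterm1 : ∀ i, vb (Sum.inl i) * (inner (𝕜 := ℝ) (pgrad ν (g ν i) xbar) d) ≤ 0 := by
      intro i
      rcases eq_or_lt_of_le (hvbL i) with heq | hpos
      · rw [← heq, zero_mul]
      · have hgge : 0 ≤ g ν i xbar := by
          by_contra hlt
          push_neg at hlt
          exact absurd (hsuppg i hlt) hpos.ne'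
        have := hdg i hgge
        nlinarith
    have hterm2 : ∀ jj, vb (Sum.inr jj) * (inner (𝕜 := ℝ) (pgrad ν (h ν jj) xbar) d) ≤ 0 := by
      intro jj
      rcases eq_or_lt_of_le (hvbR jj) with heq | hpos
      · rw [← heq, zero_mul]
      · have hgge : 0 ≤ h ν jj xbar := by
          by_contra hlt
          push_neg at hlt
          exact absurd (hsupph jj hlt) hpos.ne'
        have := hdh jj hgge
        nlinarith
    have hne : ∃ s, vb s ≠ 0 := by
      by_contra hall
      push_neg at hall
      have : vb = 0 := funext hall
      rw [this] at hnorm1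
      simp at hnorm1
    obtain ⟨s, hs⟩ := hne
    have hsum1 : ∑ i, vb (Sum.inl i) * (inner (𝕜 := ℝ) (pgrad ν (g ν i) xbar) d) ≤ 0 :=
      Finset.sum_nonpos fun i _ => hterm1 i
    have hsum2 : ∑ jj, vb (Sum.inr jj) * (inner (𝕜 := ℝ) (pgrad ν (h ν jj) xbar) d) ≤ 0 :=
      Finset.sum_nonpos fun jj _ => hterm2 jj
    rcases s with i0 | jj0
    · have hp : 0 < vb (Sum.inl i0) := lt_of_le_of_ne (hvbL i0) (Ne.symm hs)
      have hgge : 0 ≤ g ν i0 xbar := by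
        by_contra hlt
        push_neg at hlt
        exact absurd (hsuppg i0 hlt) hs
      have hlt0 : vb (Sum.inl i0) * (inner (𝕜 := ℝ) (pgrad ν (g ν i0) xbar) d) < 0 :=
        mul_neg_of_pos_of_neg hp (hdg i0 hgge)
      have hstrict : ∑ i, vb (Sum.inl i) * (inner (𝕜 := ℝ) (pgrad ν (g ν i) xbar) d) < 0 := by
        have := Finset.sum_lt_sum (fun i (_ : i ∈ Finset.univ) => hterm1 i)
          ⟨i0, Finset.mem_univ i0, hlt0⟩
        simpa using this
      linarith
    · have hp : 0 < vb (Sum.inr jj0) := lt_of_le_of_ne (hvbR jj0) (Ne.symm hs)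
      have hgge : 0 ≤ h ν jj0 xbar := by
        by_contra hlt
        push_neg at hlt
        exact absurd (hsupph jj0 hlt) hs
      have hlt0 : vb (Sum.inr jj0) * (inner (𝕜 := ℝ) (pgrad ν (h ν jj0) xbar) d) < 0 :=
        mul_neg_of_pos_of_neg hp (hdh jj0 hgge)
      have hstrict : ∑ jj, vb (Sum.inr jj) * (inner (𝕜 := ℝ) (pgrad ν (h ν jj) xbar) d) < 0 := by
        have := Finset.sum_lt_sum (fun jj (_ : jj ∈ Finset.univ) => hterm2 jj)
          ⟨jj0, Finset.mem_univ jj0, hlt0⟩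
        simpa using this
      linarith
  -- extract a convergent subsequence of multipliers
  obtain ⟨C, hC⟩ := hbdd
  obtain ⟨wb, _, σ, hσmono, hσtend⟩ := tendsto_subseq_of_bounded
    (Metric.isBounded_closedBall (x := (0 : (Fin (m ν) ⊕ Fin (p ν)) → ℝ)) (r := C))
    (fun j => mem_closedBall_zero_iff.2 (hC j))
  have hσT : Tendsto σ atTop atTop := hσmono.tendsto_atTop
  have hlamlim : ∀ i, Tendsto (fun j => lam (K (σ j) + 1) ν i) atTop (𝓝 (wb (Sum.inl i))) :=
    fun i => ((continuous_apply (Sum.inl i)).tendsto wb).comp hσtend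
  have hmulim : ∀ jj, Tendsto (fun j => mu (K (σ j) + 1) ν jj) atTop (𝓝 (wb (Sum.inr jj))) :=
    fun jj => ((continuous_apply (Sum.inr jj)).tendsto wb).comp hσtend
  have hlbpos : ∀ i, 0 ≤ wb (Sum.inl i) :=
    fun i => ge_of_tendsto' (hlamlim i) fun j => hlampos _ ν i
  -- feasibility and complementarity for g
  have hfg : ∀ i, g ν i xbar ≤ 0 ∧ min (-(g ν i xbar)) (wb (Sum.inl i)) = 0 := by
    intro i
    rcases hKey with hming | hrinf
    · have h1 : Tendsto (fun j => min (-(g ν i (x (K (σ j) + 1)))) (lam (K (σ j) + 1) ν i))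
          atTop (𝓝 0) := (hming i).comp hσT
      have h2 : Tendsto (fun j => min (-(g ν i (x (K (σ j) + 1)))) (lam (K (σ j) + 1) ν i))
          atTop (𝓝 (min (-(g ν i xbar)) (wb (Sum.inl i)))) :=
        Tendsto.min (((hygv i).comp hσT).neg) (hlamlim i)
      have heq := tendsto_nhds_unique h2 h1
      have h3 := min_le_left (-(g ν i xbar)) (wb (Sum.inl i))
      rw [heq] at h3
      exact ⟨by linarith, heq⟩
    · have hfeas : g ν i xbar ≤ 0 := by
        by_contra hpos
        push_neg at hpos
        have hev : ∀ᶠ j in atTop,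
            rho (K (σ j)) ν * (g ν i xbar / 2) ≤ lam (K (σ j) + 1) ν i := by
          have hgev : ∀ᶠ j in atTop, g ν i xbar / 2 ≤ g ν i (x (K (σ j) + 1)) :=
            ((hygv i).comp hσT).eventually (eventually_ge_nhds (by linarith))
          filter_upwards [hgev] with j hj
          rw [hlam (K (σ j)) ν i]
          calc rho (K (σ j)) ν * (g ν i xbar / 2)
              ≤ rho (K (σ j)) ν * g ν i (x (K (σ j) + 1)) :=
                mul_le_mul_of_nonneg_left hj (hρpos ν _).le
            _ ≤ u (K (σ j)) ν i + rho (K (σ j)) ν * g ν i (x (K (σ j) + 1)) :=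
                le_add_of_nonneg_left (hubd _ ν i).1
            _ ≤ max (u (K (σ j)) ν i + rho (K (σ j)) ν * g ν i (x (K (σ j) + 1))) 0 :=
                le_max_left _ _
        have hinf : Tendsto (fun j => lam (K (σ j) + 1) ν i) atTop atTop :=
          tendsto_atTop_mono' atTop hev
            ((hrinf.comp hσT).atTop_mul_const (by linarith : (0:ℝ) < g ν i xbar / 2))
        exact absurd hinf (not_tendsto_atTop_of_tendsto_nhds (hlamlim i))
      refine ⟨hfeas, ?_⟩
      rcases lt_or_eq_of_le hfeas with hlt | heq0
      · have hz : wb (Sum.inl i) = 0 :=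
          tendsto_nhds_unique (hlamlim i) ((hP1 i hlt).comp hσT)
        rw [hz]
        apply min_eq_right
        linarith
      · rw [heq0, neg_zero]
        exact min_eq_left (hlbpos i)
  -- gradient equation at the limit
  have hgrad : pgrad ν (θ ν) xbar + ∑ i, wb (Sum.inl i) • pgrad ν (g ν i) xbar
      + ∑ jj, wb (Sum.inr jj) • pgrad ν (h ν jj) xbar = 0 := by
    refine tendsto_nhds_unique ?_ (hW0.comp hσT)
    exact ((hyθ.comp hσT).add (tendsto_finset_sum _ fun i _ =>
        (hlamlim i).smul ((hyG i).comp hσT))).add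
      (tendsto_finset_sum _ fun jj _ => (hmulim jj).smul ((hyH jj).comp hσT))
  -- complementarity for h
  have hcomph : ∀ jj, min (-(h ν jj xbar)) (wb (Sum.inr jj)) = 0 := by
    intro jj
    exact tendsto_nhds_unique
      (Tendsto.min (((hyhv jj).comp hσT).neg) (hmulim jj)) ((hminh jj).comp hσT)
  exact ⟨fun i => (hfg i).1, hfeasH, fun i => wb (Sum.inl i), fun jj => wb (Sum.inr jj),
    hgrad, fun i => (hfg i).2, hcomph⟩
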